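/- Let α > β ≥ 1 be integers. For every pair of distinct elements x₁, x₂ ∈ {0,…,2^α−1}, the number of pairs (b,c) with b, c ∈ {0,…,2^α−1}, b odd, such that ⌊((b·x₁ + c) mod 2^α)/2^(α−β)⌋ = ⌊((b·x₂ + c) mod 2^α)/2^(α−β)⌋ is at most 2^(−β)·2^(2α−1). That is, the modular arithmetic hash family MH is 2^(−β)-universal. -/

import Mathlib

open Finset

/-- Double-sum reindex of `range (m*n)`. -/
lemma sum_range_mul' (m n : ℕ) (f : ℕ → ℕ) :
    ∑ d ∈ range (m * n), f d = ∑ j ∈ range m, ∑ i ∈ range n, f (j * n + i) := by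
  induction m with
  | zero => simp
  | succ m ih =>
      rw [Nat.succ_mul, Finset.sum_range_add, ih, Finset.sum_range_succ]

lemma bucket_eq (K g a i : ℕ) (hg : 0 < g) (hK : 0 < K) (hi : i < g) :
    (a * g + i) % (K * g) / g = a % K := by
  have h1 : a * g + i = (a % K * g + i) + (a / K) * (K * g) := by
    conv_lhs => rw [← Nat.div_add_mod a K]
    ring
  have h2 : a % K * g + i < K * g := by
    have := Nat.mod_lt a hK
    calc a % K * g + i < a % K * g + g := by omega
    _ = (a % K + 1) * g := by ring
    _ ≤ K * g := Nat.mul_le_mul_right _ (by omega)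
  rw [h1, Nat.add_mul_mod_self_right, Nat.mod_eq_of_lt h2, mul_comm (a % K) g,
    Nat.mul_add_div hg, Nat.div_eq_of_lt hi, add_zero]

lemma div_of_lt_add (g j i : ℕ) (hg : 0 < g) (hi : i < g) : (j * g + i) / g = j := by
  rw [mul_comm j g, Nat.mul_add_div hg, Nat.div_eq_of_lt hi, add_zero]

lemma add_mod_eq_self_iff (K j q : ℕ) (hj : j < K) : (j + q) % K = j ↔ q % K = 0 := by
  have hK : 0 < K := by omega
  constructor
  · intro h
    have h2 : (j + q % K) % K = j := by rw [Nat.add_mod_mod]; exact h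
    have h3 : q % K < K := Nat.mod_lt _ hK
    rcases Nat.lt_or_ge (j + q % K) K with h4 | h4
    · rw [Nat.mod_eq_of_lt h4] at h2; omega
    · have h5 : (j + q % K) % K = j + q % K - K := by
        rw [Nat.mod_eq_sub_mod h4, Nat.mod_eq_of_lt (by omega)]
      omega
  · intro h
    rw [Nat.add_mod, h, add_zero, Nat.mod_mod_of_dvd _ dvd_rfl, Nat.mod_eq_of_lt hj]

/-- Core counting lemma. -/
lemma core_count (K g q r : ℕ) (hg : 0 < g) (hK : 0 < K) (hr : r < g) :
    ∑ d ∈ range (K * g), (if (d + (q * g + r)) % (K * g) / g = d / g then 1 else 0)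
      = (if q % K = 0 then K * (g - r) else 0) + (if (q + 1) % K = 0 then K * r else 0) := by
  rw [sum_range_mul']
  have key : ∀ j ∈ range K, ∀ i ∈ range g,
      (if ((j * g + i) + (q * g + r)) % (K * g) / g = (j * g + i) / g then 1 else 0)
        = ((if i + r < g ∧ q % K = 0 then 1 else 0)
            + (if g ≤ i + r ∧ (q + 1) % K = 0 then 1 else 0)) := by
    intro j hj i hi
    rw [mem_range] at hj hi
    rw [div_of_lt_add g j i hg hi]
    rcases Nat.lt_or_ge (i + r) g with hir | hir
    · have e1 : (j * g + i) + (q * g + r) = (j + q) * g + (i + r) := by ring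
      rw [e1, bucket_eq K g (j + q) (i + r) hg hK hir,
        if_congr (add_mod_eq_self_iff K j q hj) rfl rfl]
      by_cases hq : q % K = 0 <;> simp [hq, hir, show ¬ g ≤ i + r by omega]
    · have e1 : (j * g + i) + (q * g + r) = (j + q + 1) * g + (i + r - g) := by
        have hjq : (j + q + 1) * g = j * g + q * g + g := by ring
        rw [hjq]; omega
      have hlt : i + r - g < g := by omega
      rw [e1, bucket_eq K g (j + q + 1) (i + r - g) hg hK hlt,
        show j + q + 1 = j + (q + 1) by ring,
        if_congr (add_mod_eq_self_iff K j (q + 1) hj) rfl rfl]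
      by_cases hq : (q + 1) % K = 0 <;> simp [hq, hir, show ¬ i + r < g by omega]
  rw [Finset.sum_congr rfl (fun j hj => Finset.sum_congr rfl (fun i hi => key j hj i hi))]
  have inner : ∀ j : ℕ, (∑ i ∈ range g,
      ((if i + r < g ∧ q % K = 0 then 1 else 0) + (if g ≤ i + r ∧ (q + 1) % K = 0 then 1 else 0)))
      = (if q % K = 0 then (g - r) else 0) + (if (q + 1) % K = 0 then r else 0) := by
    intro j
    rw [Finset.sum_add_distrib]
    congr 1
    · by_cases hq : q % K = 0
      · simp only [hq, and_true, if_true]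
        rw [← Finset.card_filter]
        have : (range g).filter (fun i => i + r < g) = range (g - r) := by
          ext x; simp only [mem_filter, mem_range]; omega
        simp [this]
      · simp [hq]
    · by_cases hq : (q + 1) % K = 0
      · simp only [hq, and_true, if_true]
        rw [← Finset.card_filter]
        have : (range g).filter (fun i => g ≤ i + r) = Finset.Ico (g - r) g := by
          ext x; simp only [mem_filter, mem_range, Finset.mem_Ico]; omega
        rw [this, Nat.card_Ico]; omega
      · simp [hq]
  rw [Finset.sum_congr rfl (fun j _ => inner j), Finset.sum_const, card_range, smul_eq_mul,
    Nat.mul_add]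
  congr 1 <;> by_cases hq : q % K = 0 <;> by_cases hq1 : (q + 1) % K = 0 <;> simp [hq, hq1]

/-- Adding a constant mod M permutes `range M`. -/
lemma sum_range_mod_add (M a : ℕ) (hM : 0 < M) (f : ℕ → ℕ) :
    ∑ c ∈ range M, f ((a + c) % M) = ∑ d ∈ range M, f d := by
  have hle : a % M ≤ a := Nat.mod_le a M
  have hlt : a % M < M := Nat.mod_lt a hM
  have hdm := Nat.div_add_mod a M
  have key : ∀ x < M, ((a + x) % M + (M - a % M)) % M = x := by
    intro x hx
    rw [Nat.mod_add_mod]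
    have h3 : a + x + (M - a % M) = x + M + M * (a / M) := by omega
    rw [h3, Nat.add_mul_mod_self_left, Nat.add_mod_right, Nat.mod_eq_of_lt hx]
  have key2 : ∀ x < M, (a + (x + (M - a % M)) % M) % M = x := by
    intro x hx
    rw [Nat.add_mod_mod]
    have h3 : a + (x + (M - a % M)) = x + M + M * (a / M) := by omega
    rw [h3, Nat.add_mul_mod_self_left, Nat.add_mod_right, Nat.mod_eq_of_lt hx]
  refine Finset.sum_nbij' (fun c => (a + c) % M) (fun d => (d + (M - a % M)) % M) ?_ ?_ ?_ ?_ ?_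
  · intro c _; exact mem_range.2 (Nat.mod_lt _ hM)
  · intro d _; exact mem_range.2 (Nat.mod_lt _ hM)
  · intro c hc; exact key c (mem_range.1 hc)
  · intro d hd; exact key2 d (mem_range.1 hd)
  · intro c _; rfl

/-- Multiplying by a unit mod M permutes `range M`. -/
lemma sum_range_mod_mul (M u : ℕ) (hM : 1 < M) (hu : Nat.Coprime u M) (f : ℕ → ℕ) :
    ∑ b ∈ range M, f ((b * u) % M) = ∑ b ∈ range M, f b := by
  obtain ⟨v, -, hv⟩ := Nat.exists_mul_mod_eq_one_of_coprime hu hM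
  have hM0 : 0 < M := by omega
  have key : ∀ x < M, ∀ w₁ w₂, w₁ * w₂ % M = 1 → (x * w₁ % M) * w₂ % M = x := by
    intro x hx w₁ w₂ hw
    rw [Nat.mod_mul_mod, mul_assoc, Nat.mul_mod, hw, Nat.mod_eq_of_lt hx, mul_one,
      Nat.mod_eq_of_lt hx]
  refine Finset.sum_nbij' (fun b => (b * u) % M) (fun b => (b * v) % M) ?_ ?_ ?_ ?_ ?_
  · intro b _; exact mem_range.2 (Nat.mod_lt _ hM0)
  · intro b _; exact mem_range.2 (Nat.mod_lt _ hM0)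
  · intro b hb; exact key b (mem_range.1 hb) u v hv
  · intro b hb; exact key b (mem_range.1 hb) v u (by rwa [mul_comm])
  · intro b _; rfl

lemma odd_mod_even_iff (x M : ℕ) (hM : Even M) (h0 : 0 < M) : Odd (x % M) ↔ Odd x := by
  have h := Nat.div_add_mod x M
  have hE : Even (M * (x / M)) := hM.mul_right _
  rw [Nat.even_iff] at hE
  rw [Nat.odd_iff, Nat.odd_iff]
  omega

/-- Main counting bound, assuming `x₂ < x₁`. -/
lemma mh_main (α β x₁ x₂ : ℕ) (hβ : 1 ≤ β) (hβα : β < α)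
    (hx₁ : x₁ < 2 ^ α) (hlt : x₂ < x₁) :
    ((Finset.range (2 ^ α) ×ˢ Finset.range (2 ^ α)).filter
        (fun bc : ℕ × ℕ => Odd bc.1 ∧
          (bc.1 * x₁ + bc.2) % 2 ^ α / 2 ^ (α - β)
            = (bc.1 * x₂ + bc.2) % 2 ^ α / 2 ^ (α - β))).card
      ≤ 2 ^ (2 * α - β - 1) := by
  set M := 2 ^ α with hM
  set g := 2 ^ (α - β) with hg
  set K := 2 ^ β with hK
  have hKg : K * g = M := by rw [hK, hg, hM, ← pow_add]; congr 1; omega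
  have hM1 : 1 < M := by rw [hM]; exact Nat.one_lt_two_pow_iff.2 (by omega)
  have hM0 : 0 < M := by omega
  have hg0 : 0 < g := Nat.pow_pos (by norm_num)
  have hK0 : 0 < K := Nat.pow_pos (by norm_num)
  set z := x₁ - x₂ with hz
  have hz0 : 0 < z := by omega
  obtain ⟨s, z', hz'odd, hzz⟩ := Nat.exists_eq_pow_mul_and_not_dvd hz0.ne' 2 (by norm_num)
  have hz'o : Odd z' := Nat.odd_iff.2 (by
    rcases Nat.mod_two_eq_zero_or_one z' with h | h
    · exact absurd (Nat.dvd_of_mod_eq_zero h) hz'odd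
    · exact h)
  have hz'1 : 1 ≤ z' := hz'o.pos
  have hzM : z < M := by omega
  have hs : s < α := by
    by_contra h
    have h1 : 2 ^ α ≤ 2 ^ s := Nat.pow_le_pow_right (by norm_num) (by omega)
    have h2 : 2 ^ s ≤ z := by
      calc 2 ^ s = 2 ^ s * 1 := by ring
      _ ≤ 2 ^ s * z' := Nat.mul_le_mul_left _ hz'1
      _ = z := hzz.symm
    omega
  set L := 2 ^ (α - s) with hL
  have hLM : 2 ^ s * L = M := by rw [hL, hM, ← pow_add]; congr 1; omega
  have hL0 : 0 < L := Nat.pow_pos (by norm_num)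
  have hLeven : Even L := by
    rw [hL]; exact (Nat.even_pow (n := α - s)).2 ⟨even_two, by omega⟩
  have hMeven : Even M := by
    rw [hM]; exact (Nat.even_pow (n := α)).2 ⟨even_two, by omega⟩
  set NC : ℕ → ℕ := fun v => ∑ d ∈ range M, (if (d + v) % M / g = d / g then 1 else 0) with hNC
  have hNCval : ∀ v : ℕ, NC v = (if v / g % K = 0 then K * (g - v % g) else 0)
      + (if (v / g + 1) % K = 0 then K * (v % g) else 0) := by
    intro v
    have h := core_count K g (v / g) (v % g) hg0 hK0 (Nat.mod_lt _ hg0)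
    rw [mul_comm (v / g) g, Nat.div_add_mod, hKg] at h
    exact h
  have step2 : ∀ b ∈ range M,
      (∑ c ∈ range M, if Odd b ∧ (b * x₁ + c) % M / g = (b * x₂ + c) % M / g then 1 else 0)
        = if Odd b then NC ((b * z) % M) else 0 := by
    intro b _
    by_cases hb : Odd b
    · simp only [hb, true_and, if_true]
      have hx : ∀ c : ℕ, ((b * x₁ + c) % M / g = (b * x₂ + c) % M / g)
          ↔ (((b * x₂ + c) % M + (b * z) % M) % M / g = (b * x₂ + c) % M / g) := by
        intro c
        have e1 : b * x₁ + c = (b * x₂ + c) + b * z := by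
          have hx12 : x₁ = x₂ + z := by omega
          rw [hx12]; ring
        rw [e1, Nat.add_mod (b * x₂ + c) (b * z)]
      have h1 : (∑ c ∈ range M, if (b * x₁ + c) % M / g = (b * x₂ + c) % M / g then 1 else 0)
          = ∑ c ∈ range M,
              if ((b * x₂ + c) % M + (b * z) % M) % M / g = (b * x₂ + c) % M / g then 1 else 0 :=
        Finset.sum_congr rfl (fun c _ => if_congr (hx c) rfl rfl)
      rw [h1]
      exact sum_range_mod_add M (b * x₂) hM0
        (fun d => if (d + (b * z) % M) % M / g = d / g then 1 else 0)
    · simp [hb]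
  have step3 : ∀ b ∈ range M, (if Odd b then NC ((b * z) % M) else 0)
      = (if Odd ((b * z') % M) then NC ((b * z') % M % L * 2 ^ s) else 0) := by
    intro b _
    have hodd : Odd ((b * z') % M) ↔ Odd b := by
      rw [odd_mod_even_iff _ _ hMeven hM0, Nat.odd_mul]
      simp [hz'o]
    have harg : (b * z) % M = ((b * z') % M) % L * 2 ^ s := by
      have hdvd : L ∣ M := ⟨2 ^ s, by rw [← hLM]; ring⟩
      have hMdec : M = L * 2 ^ s := by rw [← hLM]; ring
      rw [hzz, show b * (2 ^ s * z') = b * z' * 2 ^ s by ring,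
        Nat.mod_mod_of_dvd _ hdvd, hMdec, Nat.mul_mod_mul_right]
    rw [harg, if_congr hodd.symm rfl rfl]
  have main_eq :
      (((Finset.range M ×ˢ Finset.range M).filter
        (fun bc : ℕ × ℕ => Odd bc.1 ∧
          (bc.1 * x₁ + bc.2) % M / g = (bc.1 * x₂ + bc.2) % M / g)).card : ℕ)
      = 2 ^ s * ∑ i ∈ range L, (if Odd i then NC (i * 2 ^ s) else 0) := by
    calc (((Finset.range M ×ˢ Finset.range M).filter
        (fun bc : ℕ × ℕ => Odd bc.1 ∧
          (bc.1 * x₁ + bc.2) % M / g = (bc.1 * x₂ + bc.2) % M / g)).card : ℕ)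
        = ∑ b ∈ range M, ∑ c ∈ range M,
            (if Odd b ∧ (b * x₁ + c) % M / g = (b * x₂ + c) % M / g then 1 else 0) := by
          rw [Finset.card_filter, Finset.sum_product]
    _ = ∑ b ∈ range M, (if Odd b then NC ((b * z) % M) else 0) := Finset.sum_congr rfl step2
    _ = ∑ b ∈ range M, (if Odd ((b * z') % M) then NC ((b * z') % M % L * 2 ^ s) else 0) :=
          Finset.sum_congr rfl step3
    _ = ∑ b ∈ range M, (if Odd b then NC (b % L * 2 ^ s) else 0) :=
          sum_range_mod_mul M z' hM1 ((hz'o.coprime_two_left.symm).pow_right α)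
            (fun x => if Odd x then NC (x % L * 2 ^ s) else 0)
    _ = ∑ b ∈ range (2 ^ s * L), (if Odd b then NC (b % L * 2 ^ s) else 0) := by rw [hLM]
    _ = ∑ j ∈ range (2 ^ s), ∑ i ∈ range L,
          (if Odd (j * L + i) then NC ((j * L + i) % L * 2 ^ s) else 0) :=
          sum_range_mul' _ _ _
    _ = ∑ j ∈ range (2 ^ s), ∑ i ∈ range L, (if Odd i then NC (i * 2 ^ s) else 0) := by
          refine Finset.sum_congr rfl (fun j _ => Finset.sum_congr rfl (fun i hi => ?_))
          rw [mem_range] at hi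
          have h1 : (j * L + i) % L = i := by
            rw [mul_comm j L, Nat.mul_add_mod, Nat.mod_eq_of_lt hi]
          have h2 : Odd (j * L + i) ↔ Odd i := by
            have hE : Even (j * L) := hLeven.mul_left j
            rw [Nat.even_iff] at hE
            rw [Nat.odd_iff, Nat.odd_iff, Nat.add_mod, hE]
            simp [Nat.mod_mod_of_dvd]
          rw [h1, if_congr h2 rfl rfl]
    _ = 2 ^ s * ∑ i ∈ range L, (if Odd i then NC (i * 2 ^ s) else 0) := by
          rw [Finset.sum_const, card_range, smul_eq_mul]
  rw [main_eq]
  rcases Nat.lt_or_ge s (α - β) with hcase | hcase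
  · -- s < α - β : exact count
    set t := α - β - s with ht
    have ht1 : 1 ≤ t := by omega
    have hgdec : g = 2 ^ t * 2 ^ s := by rw [hg, ← pow_add]; congr 1; omega
    have hLdec : L = K * 2 ^ t := by rw [hL, hK, ← pow_add]; congr 1; omega
    have hpoint : ∀ j ∈ range K, ∀ v ∈ range (2 ^ t),
        (if Odd (j * 2 ^ t + v) then NC ((j * 2 ^ t + v) * 2 ^ s) else 0)
          = (if j = 0 then (if Odd v then K * (g - v * 2 ^ s) else 0) else 0)
            + (if j = K - 1 then (if Odd v then K * (v * 2 ^ s) else 0) else 0) := by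
      intro j hj v hv
      rw [mem_range] at hj hv
      have hodd : Odd (j * 2 ^ t + v) ↔ Odd v := by
        have hE : Even (j * 2 ^ t) := by
          refine Even.mul_left ?_ j
          exact (Nat.even_pow (n := t)).2 ⟨even_two, by omega⟩
        rw [Nat.even_iff] at hE
        rw [Nat.odd_iff, Nat.odd_iff, Nat.add_mod, hE]
        simp [Nat.mod_mod_of_dvd]
      have hdiv : ((j * 2 ^ t + v) * 2 ^ s) / g = j := by
        rw [hgdec, Nat.mul_div_mul_right _ _ (Nat.pow_pos (n := s) (by norm_num)),
          div_of_lt_add _ _ _ (Nat.pow_pos (n := t) (by norm_num)) hv]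
      have hmod : ((j * 2 ^ t + v) * 2 ^ s) % g = v * 2 ^ s := by
        rw [hgdec, Nat.mul_mod_mul_right, mul_comm j (2 ^ t), Nat.mul_add_mod,
          Nat.mod_eq_of_lt hv]
      have hc1 : j % K = 0 ↔ j = 0 := by
        rw [Nat.mod_eq_of_lt hj]
      have hc2 : (j + 1) % K = 0 ↔ j = K - 1 := by
        constructor
        · intro h
          have hd : K ∣ j + 1 := Nat.dvd_of_mod_eq_zero h
          have := Nat.le_of_dvd (by omega) hd
          omega
        · intro h
          subst h
          have : K - 1 + 1 = K := by omega
          rw [this, Nat.mod_self]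
      by_cases hov : Odd v
      · rw [if_congr hodd rfl rfl, if_pos hov, hNCval, hdiv, hmod,
          if_congr hc1 rfl rfl, if_congr hc2 rfl rfl]
        simp only [hov, if_true]
      · rw [if_congr hodd rfl rfl, if_neg hov]
        simp [hov]
    have hc2' : hpoint = hpoint := rfl
    have hsum : (∑ i ∈ range L, (if Odd i then NC (i * 2 ^ s) else 0))
        = 2 ^ (t - 1) * (K * g) := by
      calc (∑ i ∈ range L, (if Odd i then NC (i * 2 ^ s) else 0))
          = ∑ i ∈ range (K * 2 ^ t), (if Odd i then NC (i * 2 ^ s) else 0) := by rw [← hLdec]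
      _ = ∑ j ∈ range K, ∑ v ∈ range (2 ^ t),
            (if Odd (j * 2 ^ t + v) then NC ((j * 2 ^ t + v) * 2 ^ s) else 0) :=
            sum_range_mul' _ _ _
      _ = ∑ j ∈ range K, ∑ v ∈ range (2 ^ t),
            ((if j = 0 then (if Odd v then K * (g - v * 2 ^ s) else 0) else 0)
              + (if j = K - 1 then (if Odd v then K * (v * 2 ^ s) else 0) else 0)) :=
            Finset.sum_congr rfl (fun j hj => Finset.sum_congr rfl (fun v hv => hpoint j hj v hv))
      _ = (∑ j ∈ range K, if j = 0 then (∑ v ∈ range (2 ^ t),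
              (if Odd v then K * (g - v * 2 ^ s) else 0)) else 0)
          + (∑ j ∈ range K, if j = K - 1 then (∑ v ∈ range (2 ^ t),
              (if Odd v then K * (v * 2 ^ s) else 0)) else 0) := by
            rw [← Finset.sum_add_distrib]
            refine Finset.sum_congr rfl (fun j _ => ?_)
            rw [Finset.sum_add_distrib]
            congr 1 <;> [by_cases hj : j = 0; by_cases hj : j = K - 1] <;> simp [hj]
      _ = (∑ v ∈ range (2 ^ t), (if Odd v then K * (g - v * 2 ^ s) else 0))
          + (∑ v ∈ range (2 ^ t), (if Odd v then K * (v * 2 ^ s) else 0)) := by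
            rw [Finset.sum_ite_eq' (range K) 0, Finset.sum_ite_eq' (range K) (K - 1)]
            simp [hK0, Nat.sub_lt hK0]
      _ = ∑ v ∈ range (2 ^ t), (if Odd v then K * g else 0) := by
            rw [← Finset.sum_add_distrib]
            refine Finset.sum_congr rfl (fun v hv => ?_)
            rw [mem_range] at hv
            have hvle : v * 2 ^ s ≤ g := by
              rw [hgdec]
              exact Nat.mul_le_mul_right _ (by omega)
            by_cases hov : Odd v <;> simp [hov]
            rw [← Nat.mul_add, Nat.sub_add_cancel hvle]
      _ = ∑ j ∈ range (2 ^ (t - 1)), ∑ i ∈ range 2, (if Odd (j * 2 + i) then K * g else 0) := by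
            rw [show (2 : ℕ) ^ t = 2 ^ (t - 1) * 2 by rw [← pow_succ]; congr 1; omega]
            exact sum_range_mul' _ _ _
      _ = ∑ j ∈ range (2 ^ (t - 1)), (K * g) := by
            refine Finset.sum_congr rfl (fun j _ => ?_)
            rw [Finset.sum_range_succ, Finset.sum_range_one]
            rw [if_neg (by simp [Nat.odd_iff, Nat.mul_mod_left]), if_pos ⟨j, by ring⟩, zero_add]
      _ = 2 ^ (t - 1) * (K * g) := by rw [Finset.sum_const, card_range, smul_eq_mul]
    rw [hsum, hK, hg]
    have : 2 ^ s * (2 ^ (t - 1) * (2 ^ β * 2 ^ (α - β))) = 2 ^ (2 * α - β - 1) := by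
      rw [← pow_add, ← pow_add, ← pow_add]; congr 1; omega
    rw [this]
  · -- α - β ≤ s : count is zero
    have hzero : ∀ i ∈ range L, (if Odd i then NC (i * 2 ^ s) else 0) = 0 := by
      intro i _
      by_cases hoi : Odd i
      swap
      · simp [hoi]
      simp only [hoi, if_true]
      have h2s : (2 : ℕ) ^ s = g * 2 ^ (s - (α - β)) := by
        rw [hg, ← pow_add]; congr 1; omega
      have hv : i * 2 ^ s = (i * 2 ^ (s - (α - β))) * g := by rw [h2s]; ring
      have hmod : (i * 2 ^ s) % g = 0 := by rw [hv, Nat.mul_mod_left]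
      have hdiv : (i * 2 ^ s) / g = i * 2 ^ (s - (α - β)) := by
        rw [hv, Nat.mul_div_cancel _ hg0]
      have hc1 : ¬ (i * 2 ^ (s - (α - β))) % K = 0 := by
        intro h
        have hd : K ∣ i * 2 ^ (s - (α - β)) := Nat.dvd_of_mod_eq_zero h
        rw [hK] at hd
        have hsplit : (2 : ℕ) ^ β = 2 ^ (β - (s - (α - β))) * 2 ^ (s - (α - β)) := by
          rw [← pow_add]; congr 1; omega
        rw [hsplit] at hd
        have hd2 : (2 : ℕ) ^ (β - (s - (α - β))) ∣ i :=
          Nat.dvd_of_mul_dvd_mul_right (by positivity : (0 : ℕ) < 2 ^ (s - (α - β))) hd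
        have h2i : 2 ∣ i := dvd_trans (dvd_pow_self 2 (by omega : β - (s - (α - β)) ≠ 0)) hd2
        rw [Nat.odd_iff] at hoi
        omega
      rw [hNCval, hdiv, hmod, if_neg hc1]
      simp
    rw [Finset.sum_eq_zero hzero, Nat.mul_zero]
    exact Nat.zero_le _

theorem mh_delta_universal (α β : ℕ) (hβ : 1 ≤ β) (hβα : β < α)
    (x₁ x₂ : ℕ) (hx₁ : x₁ < 2 ^ α) (hx₂ : x₂ < 2 ^ α) (hne : x₁ ≠ x₂) :
    (((Finset.range (2 ^ α) ×ˢ Finset.range (2 ^ α)).filter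
        (fun bc : ℕ × ℕ => Odd bc.1 ∧
          (bc.1 * x₁ + bc.2) % 2 ^ α / 2 ^ (α - β)
            = (bc.1 * x₂ + bc.2) % 2 ^ α / 2 ^ (α - β))).card : ℝ)
      ≤ (2 : ℝ) ^ (-(β : ℤ)) * 2 ^ (2 * α - 1) := by
  have key : ((Finset.range (2 ^ α) ×ˢ Finset.range (2 ^ α)).filter
        (fun bc : ℕ × ℕ => Odd bc.1 ∧
          (bc.1 * x₁ + bc.2) % 2 ^ α / 2 ^ (α - β)
            = (bc.1 * x₂ + bc.2) % 2 ^ α / 2 ^ (α - β))).card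
      ≤ 2 ^ (2 * α - β - 1) := by
    rcases hne.lt_or_gt with h | h
    · have hswap : ((Finset.range (2 ^ α) ×ˢ Finset.range (2 ^ α)).filter
          (fun bc : ℕ × ℕ => Odd bc.1 ∧
            (bc.1 * x₁ + bc.2) % 2 ^ α / 2 ^ (α - β)
              = (bc.1 * x₂ + bc.2) % 2 ^ α / 2 ^ (α - β)))
          = ((Finset.range (2 ^ α) ×ˢ Finset.range (2 ^ α)).filter
          (fun bc : ℕ × ℕ => Odd bc.1 ∧
            (bc.1 * x₂ + bc.2) % 2 ^ α / 2 ^ (α - β)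
              = (bc.1 * x₁ + bc.2) % 2 ^ α / 2 ^ (α - β))) := by
        refine Finset.filter_congr (fun bc _ => ?_)
        constructor <;> exact fun ⟨h1, h2⟩ => ⟨h1, h2.symm⟩
      rw [hswap]
      exact mh_main α β x₂ x₁ hβ hβα hx₂ h
    · exact mh_main α β x₁ x₂ hβ hβα hx₁ h
  have hcast : ((2 ^ (2 * α - β - 1) : ℕ) : ℝ) = (2 : ℝ) ^ (-(β : ℤ)) * 2 ^ (2 * α - 1) := by
    push_cast
    rw [zpow_neg, zpow_natCast, inv_mul_eq_div, eq_div_iff (by positivity), ← pow_add]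
    congr 1
    omega
  rw [← hcast]
  exact_mod_cast key
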